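/- Let Z(t) = B(t) + μt + Rℓ(t) be obliquely reflected Brownian motion in the upper half-plane with identity covariance, drift μ = (μ₁,μ₂), reflection vector R = (r,1), where ℓ(t) = −inf_{0≤s≤t}(B₂(s)+μ₂s). Then for all t ≥ 0, Z₁(t) ≤ (μ₁ + rμ₂⁻)t + B₁(t) + |r| sup_{0≤s≤t}|B₂(s)|, where μ₂⁻ = max(−μ₂,0). Consequently, if μ₁ + rμ₂⁻ < 0 then Z₁(t) → −∞ almost surely as t → ∞. -/

import Mathlib

open MeasureTheory ProbabilityTheory Filter
open scoped NNReal ENNReal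
open Set Real

lemma BM.gauss_tail_Ici {v : ℝ≥0} (hv : v ≠ 0) {a : ℝ} (h0 : 0 < a) (hva : Real.sqrt v ≤ a) :
    gaussianReal 0 v (Set.Ici a) ≤ ENNReal.ofReal (Real.exp (-a^2/(2*v))) := by
  have hvpos : (0:ℝ) < (v:ℝ) := by exact_mod_cast pos_iff_ne_zero.mpr hv
  set b : ℝ := (2*(v:ℝ))⁻¹ with hbdef
  have hb : 0 < b := by positivity
  have I1 : ∫ x in Ioi a, x * Real.exp (-b * x^2) = (2*b)⁻¹ * Real.exp (-b*a^2) := by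
    have hderiv : ∀ x ∈ Ici a, HasDerivAt (fun x => -(2*b)⁻¹ * Real.exp (-b*x^2))
        (x * Real.exp (-b * x^2)) x := by
      intro x _
      have h1 : HasDerivAt (fun x : ℝ => -b*x^2) (-b*(2*x)) x := by
        simpa using ((hasDerivAt_pow 2 x).const_mul (-b))
      have h2 := (h1.exp).const_mul (-(2*b)⁻¹)
      refine h2.congr_deriv ?_
      have hb0 : (2*b)⁻¹ * (2*b) = 1 := inv_mul_cancel₀ (by positivity)
      linear_combination (x * Real.exp (-b*x^2)) * hb0
    have hint : IntegrableOn (fun x => x * Real.exp (-b * x^2)) (Ioi a) :=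
      (integrable_mul_exp_neg_mul_sq hb).integrableOn
    have htend : Tendsto (fun x : ℝ => -(2*b)⁻¹ * Real.exp (-b*x^2)) atTop (nhds 0) := by
      have h3 : Tendsto (fun x : ℝ => -b*x^2) atTop atBot :=
        (tendsto_pow_atTop two_ne_zero).const_mul_atTop_of_neg (neg_lt_zero.2 hb)
      have h4 := (Real.tendsto_exp_atBot).comp h3
      simpa using (h4.const_mul (-(2*b)⁻¹))
    have := integral_Ioi_of_hasDerivAt_of_tendsto' hderiv hint htend
    rw [this]
    ring
  have hint : IntegrableOn (fun x => x * Real.exp (-b * x^2)) (Ioi a) :=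
    (integrable_mul_exp_neg_mul_sq hb).integrableOn
  have hpdf_int : IntegrableOn (gaussianPDFReal 0 v) (Ioi a) :=
    (integrable_gaussianPDFReal 0 v).integrableOn
  have hg_int : IntegrableOn
      (fun x => (Real.sqrt (2*π*v))⁻¹ * a⁻¹ * (x * Real.exp (-b*x^2))) (Ioi a) :=
    hint.const_mul _
  have hmono : ∀ x ∈ Ioi a, gaussianPDFReal 0 v x
      ≤ (Real.sqrt (2*π*v))⁻¹ * a⁻¹ * (x * Real.exp (-b*x^2)) := by
    intro x hx
    have hxa : a < x := hx
    have hexp : Real.exp (-(x-0)^2/(2*(v:ℝ))) = Real.exp (-b*x^2) := by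
      congr 1
      rw [hbdef]
      field_simp
      ring
    rw [gaussianPDFReal, hexp]
    have h1 : (1:ℝ) ≤ a⁻¹ * x := by
      rw [← inv_mul_cancel₀ (ne_of_gt h0)]
      exact mul_le_mul_of_nonneg_left hxa.le (by positivity)
    have h2 : Real.exp (-b*x^2) ≤ a⁻¹ * x * Real.exp (-b*x^2) := by
      nth_rewrite 1 [← one_mul (Real.exp (-b*x^2))]
      exact mul_le_mul_of_nonneg_right h1 (Real.exp_nonneg _)
    calc (Real.sqrt (2*π*v))⁻¹ * Real.exp (-b*x^2)
        ≤ (Real.sqrt (2*π*v))⁻¹ * (a⁻¹ * x * Real.exp (-b*x^2)) := by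
          exact mul_le_mul_of_nonneg_left h2 (by positivity)
      _ = (Real.sqrt (2*π*v))⁻¹ * a⁻¹ * (x * Real.exp (-b*x^2)) := by ring
  have hIle : ∫ x in Ioi a, gaussianPDFReal 0 v x
      ≤ ∫ x in Ioi a, (Real.sqrt (2*π*v))⁻¹ * a⁻¹ * (x * Real.exp (-b*x^2)) :=
    setIntegral_mono_on hpdf_int hg_int measurableSet_Ioi hmono
  have hIval : ∫ x in Ioi a, (Real.sqrt (2*π*v))⁻¹ * a⁻¹ * (x * Real.exp (-b*x^2))
      = (Real.sqrt (2*π*v))⁻¹ * a⁻¹ * ((2*b)⁻¹ * Real.exp (-b*a^2)) := by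
    rw [MeasureTheory.integral_const_mul, I1]
  have hfinal : (Real.sqrt (2*π*v))⁻¹ * a⁻¹ * ((2*b)⁻¹ * Real.exp (-b*a^2))
      ≤ Real.exp (-a^2/(2*(v:ℝ))) := by
    have hbb : (2*b)⁻¹ = (v:ℝ) := by rw [hbdef]; field_simp
    have hexp : Real.exp (-b*a^2) = Real.exp (-a^2/(2*(v:ℝ))) := by
      congr 1; rw [hbdef]; field_simp
    rw [hbb, hexp]
    have hle1 : (v:ℝ) ≤ a * Real.sqrt (2*π*v) := by
      have h2 : Real.sqrt (v:ℝ) * Real.sqrt (v:ℝ) = (v:ℝ) := Real.mul_self_sqrt hvpos.le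
      have h3 : Real.sqrt (v:ℝ) ≤ Real.sqrt (2*π*(v:ℝ)) := by
        apply Real.sqrt_le_sqrt
        nlinarith [Real.pi_gt_three]
      calc (v:ℝ) = Real.sqrt (v:ℝ) * Real.sqrt (v:ℝ) := h2.symm
        _ ≤ a * Real.sqrt (2*π*(v:ℝ)) :=
          mul_le_mul hva h3 (Real.sqrt_nonneg _) h0.le
    calc (Real.sqrt (2*π*v))⁻¹ * a⁻¹ * ((v:ℝ) * Real.exp (-a^2/(2*(v:ℝ))))
        = ((v:ℝ) / (a * Real.sqrt (2*π*v))) * Real.exp (-a^2/(2*(v:ℝ))) := by ring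
      _ ≤ 1 * Real.exp (-a^2/(2*(v:ℝ))) := by
          apply mul_le_mul_of_nonneg_right _ (Real.exp_nonneg _)
          rw [div_le_one (by positivity)]
          exact hle1
      _ = Real.exp (-a^2/(2*(v:ℝ))) := one_mul _
  rw [gaussianReal_apply_eq_integral 0 hv, MeasureTheory.integral_Ici_eq_integral_Ioi]
  exact ENNReal.ofReal_le_ofReal (hIle.trans (hIval.le.trans hfinal))


lemma BM.gauss_abs_tail {Ω : Type*} [MeasureSpace Ω] {X : Ω → ℝ} (hX : Measurable X)
    {v : ℝ≥0} (hv : v ≠ 0) (hmap : Measure.map X ℙ = gaussianReal 0 v)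
    {a : ℝ} (h0 : 0 < a) (hva : Real.sqrt v ≤ a) :
    (ℙ : Measure Ω) {ω | a ≤ |X ω|} ≤ ENNReal.ofReal (2 * Real.exp (-a^2/(2*v))) := by
  have hmapneg : Measure.map (fun ω => -X ω) (ℙ : Measure Ω) = gaussianReal 0 v := by
    have hcomp : (fun ω => -X ω) = (fun x : ℝ => -1 * x) ∘ X := by
      funext ω; simp
    rw [hcomp, ← Measure.map_map (measurable_id'.const_mul (-1)) hX, hmap,
      gaussianReal_map_const_mul (-1)]
    norm_num
  have hsub : {ω | a ≤ |X ω|} ⊆ X ⁻¹' (Set.Ici a) ∪ (fun ω => -X ω) ⁻¹' (Set.Ici a) := by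
    intro ω hω
    have hω' : a ≤ |X ω| := hω
    rcases abs_cases (X ω) with ⟨h, _⟩ | ⟨h, _⟩
    · left
      simp only [Set.mem_preimage, Set.mem_Ici]
      linarith
    · right
      simp only [Set.mem_preimage, Set.mem_Ici]
      linarith
  have h1 : (ℙ : Measure Ω) (X ⁻¹' (Set.Ici a)) ≤ ENNReal.ofReal (Real.exp (-a^2/(2*v))) := by
    rw [← Measure.map_apply hX measurableSet_Ici, hmap]
    exact BM.gauss_tail_Ici hv h0 hva
  have h2 : (ℙ : Measure Ω) ((fun ω => -X ω) ⁻¹' (Set.Ici a))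
      ≤ ENNReal.ofReal (Real.exp (-a^2/(2*v))) := by
    rw [← Measure.map_apply (f := fun ω => -X ω) hX.neg measurableSet_Ici, hmapneg]
    exact BM.gauss_tail_Ici hv h0 hva
  calc (ℙ : Measure Ω) {ω | a ≤ |X ω|}
      ≤ (ℙ : Measure Ω) (X ⁻¹' (Set.Ici a) ∪ (fun ω => -X ω) ⁻¹' (Set.Ici a)) :=
        measure_mono hsub
    _ ≤ (ℙ : Measure Ω) (X ⁻¹' (Set.Ici a)) + (ℙ : Measure Ω) ((fun ω => -X ω) ⁻¹' (Set.Ici a)) :=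
        measure_union_le _ _
    _ ≤ ENNReal.ofReal (Real.exp (-a^2/(2*v))) + ENNReal.ofReal (Real.exp (-a^2/(2*v))) :=
        add_le_add h1 h2
    _ = ENNReal.ofReal (2 * Real.exp (-a^2/(2*v))) := by
        rw [← ENNReal.ofReal_add (Real.exp_nonneg _) (Real.exp_nonneg _)]
        congr 1
        ring


noncomputable def BM.r : ℝ := (2:ℝ) ^ (-(1/4) : ℝ)

lemma BM.r_pos : 0 < BM.r := Real.rpow_pos_of_pos (by norm_num) _

lemma BM.r_le : BM.r ≤ 11/13 := by
  have h4 : BM.r ^ (4:ℕ) = 1/2 := by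
    rw [BM.r, ← Real.rpow_natCast ((2:ℝ) ^ (-(1/4):ℝ)) 4, ← Real.rpow_mul (by norm_num)]
    norm_num
  apply le_of_pow_le_pow_left₀ (n := 4) (by norm_num) (by norm_num)
  rw [h4]
  norm_num

lemma BM.r_lt_one : BM.r < 1 := lt_of_le_of_lt BM.r_le (by norm_num)

lemma BM.sum_r_le {k : ℕ} : ∑ i ∈ Finset.Icc 1 k, BM.r ^ i ≤ 11/2 := by
  have hr := BM.r_pos
  have h1 : ∑ i ∈ Finset.Icc 1 k, BM.r ^ i = ∑ i ∈ Finset.range k, BM.r ^ (1+i) := by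
    rw [← Finset.Ico_add_one_right_eq_Icc, Finset.sum_Ico_eq_sum_range]
    simp
  rw [h1]
  have h2 : ∑ i ∈ Finset.range k, BM.r ^ (1+i) ≤ ∑' i : ℕ, BM.r ^ (1+i) := by
    apply Summable.sum_le_tsum
    · intro i _; positivity
    · apply Summable.comp_injective ?_ (add_right_injective 1)
      exact summable_geometric_of_lt_one BM.r_pos.le BM.r_lt_one
  refine h2.trans ?_
  have h3 : ∑' i : ℕ, BM.r ^ (1+i) = BM.r * (1 - BM.r)⁻¹ := by
    rw [← tsum_geometric_of_lt_one BM.r_pos.le BM.r_lt_one, ← tsum_mul_left]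
    congr 1
    funext i
    rw [pow_add, pow_one]
  rw [h3]
  have h5 : (1 - BM.r)⁻¹ ≤ (1 - 11/13)⁻¹ := by
    apply inv_anti₀ (by norm_num)
    linarith [BM.r_le]
  calc BM.r * (1 - BM.r)⁻¹ ≤ (11/13) * (1 - 11/13)⁻¹ :=
        mul_le_mul BM.r_le h5 (inv_nonneg.mpr (by linarith [BM.r_lt_one])) (by norm_num)
    _ ≤ 11/2 := by norm_num

-- the chaining lemma
lemma BM.chain (g : ℝ → ℝ) (hg : Continuous g) (N : ℕ) (a : ℝ) (ha : 0 ≤ a)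
    (H0 : ∀ j : ℕ, j ≤ N → |g j| ≤ a/2)
    (Hi : ∀ i : ℕ, 1 ≤ i → ∀ j : ℕ, j < N * 2^i →
      |g ((j+1)/2^i) - g (j/2^i)| ≤ BM.r^i / 11 * a) :
    ∀ t ∈ Set.Icc (0:ℝ) N, |g t| ≤ a := by
  have hr := BM.r_pos
  have key : ∀ k : ℕ, ∀ j : ℕ, j ≤ N * 2^k →
      |g (j/2^k)| ≤ a/2 + (∑ i ∈ Finset.Icc 1 k, BM.r^i / 11) * a := by
    intro k
    induction k with
    | zero => intro j hj; simpa using H0 j (by simpa using hj)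
    | succ k ih =>
      intro j hj
      have hj' : j ≤ 2 * (N * 2^k) := by
        have h2 : N * 2^(k+1) = 2*(N*2^k) := by ring
        omega
      have hsum : ∑ i ∈ Finset.Icc 1 (k+1), BM.r^i / 11
          = (∑ i ∈ Finset.Icc 1 k, BM.r^i / 11) + BM.r^(k+1)/11 :=
        Finset.sum_Icc_succ_top (by omega) _
      have hrpos : (0:ℝ) ≤ BM.r^(k+1)/11 * a := by positivity
      rcases Nat.even_or_odd j with ⟨m, hm⟩ | ⟨m, hm⟩
      · -- j = m + m
        have hmle : m ≤ N * 2^k := by omega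
        have heq : ((j:ℝ))/2^(k+1) = (m:ℝ)/2^k := by
          subst hm; push_cast; rw [pow_succ]; field_simp; ring
        rw [heq]
        calc |g ((m:ℝ)/2^k)| ≤ a/2 + (∑ i ∈ Finset.Icc 1 k, BM.r^i / 11) * a := ih m hmle
          _ ≤ a/2 + (∑ i ∈ Finset.Icc 1 (k+1), BM.r^i / 11) * a := by
              rw [hsum, add_mul]; linarith
      · -- j = 2m+1
        have hmlt : 2*m < N * 2^(k+1) := by
          have h2 : N * 2^(k+1) = 2*(N*2^k) := by ring
          omega
        have hmle : m ≤ N * 2^k := by omega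
        have heq1 : ((2*m:ℕ):ℝ)/2^(k+1) = (m:ℝ)/2^k := by
          push_cast; rw [pow_succ]; field_simp
        have heq2 : ((j:ℝ))/2^(k+1) = (((2*m:ℕ):ℝ)+1)/2^(k+1) := by
          subst hm; push_cast; ring_nf
        have hincr := Hi (k+1) (by omega) (2*m) hmlt
        rw [heq1] at hincr
        have hstep : |g ((j:ℝ)/2^(k+1))| ≤ |g ((m:ℝ)/2^k)| + BM.r^(k+1)/11 * a := by
          rw [heq2]
          calc |g ((((2*m:ℕ):ℝ)+1)/2^(k+1))|
              = |g ((m:ℝ)/2^k) + (g ((((2*m:ℕ):ℝ)+1)/2^(k+1)) - g ((m:ℝ)/2^k))| := by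
                congr 1; ring
            _ ≤ |g ((m:ℝ)/2^k)| + |g ((((2*m:ℕ):ℝ)+1)/2^(k+1)) - g ((m:ℝ)/2^k)| := abs_add_le _ _
            _ ≤ |g ((m:ℝ)/2^k)| + BM.r^(k+1)/11 * a := by
                exact add_le_add_right hincr _
        calc |g ((j:ℝ)/2^(k+1))| ≤ |g ((m:ℝ)/2^k)| + BM.r^(k+1)/11 * a := hstep
          _ ≤ (a/2 + (∑ i ∈ Finset.Icc 1 k, BM.r^i / 11) * a) + BM.r^(k+1)/11 * a := by
              linarith [ih m hmle]
          _ = a/2 + (∑ i ∈ Finset.Icc 1 (k+1), BM.r^i / 11) * a := by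
              rw [hsum, add_mul]; ring
  have keybound : ∀ k : ℕ, ∀ j : ℕ, j ≤ N * 2^k → |g (j/2^k)| ≤ a := by
    intro k j hj
    refine (key k j hj).trans ?_
    have h1 : (∑ i ∈ Finset.Icc 1 k, BM.r^i / 11) ≤ 1/2 := by
      rw [← Finset.sum_div]
      linarith [BM.sum_r_le (k := k)]
    have h2 : (0:ℝ) ≤ ∑ i ∈ Finset.Icc 1 k, BM.r^i / 11 :=
      Finset.sum_nonneg (fun i _ => by positivity)
    nlinarith
  -- density step
  intro t ht
  obtain ⟨ht0, htN⟩ := ht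
  have hdist : ∀ k : ℕ, |((⌊t * 2^k⌋₊ : ℝ)/2^k) - t| ≤ (1/2:ℝ)^k := by
    intro k
    have h2k : (0:ℝ) < 2^k := by positivity
    have hfl : (⌊t * 2^k⌋₊ : ℝ) ≤ t * 2^k := Nat.floor_le (by positivity)
    have hfl2 : t * 2^k < (⌊t * 2^k⌋₊ : ℝ) + 1 := Nat.lt_floor_add_one _
    have hhalf : ((1:ℝ)/2)^k * 2^k = 1 := by
      rw [div_pow, one_pow]; field_simp
    rw [abs_le]
    constructor
    · rw [neg_le, neg_sub, sub_le_iff_le_add]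
      have ht' : t < ((⌊t * 2^k⌋₊:ℝ)+1)/2^k := by rw [lt_div_iff₀ h2k]; linarith
      have hpow : (1/2:ℝ)^k = 1/2^k := by rw [div_pow, one_pow]
      have he : ((⌊t * 2^k⌋₊:ℝ)+1)/2^k = (1/2:ℝ)^k + (⌊t * 2^k⌋₊:ℝ)/2^k := by
        rw [hpow]; ring
      linarith
    · have : (⌊t * 2^k⌋₊ : ℝ)/2^k ≤ t := by rw [div_le_iff₀ h2k]; linarith
      have hp : (0:ℝ) ≤ (1/2:ℝ)^k := by positivity
      linarith
  have hseq : Tendsto (fun k : ℕ => ((⌊t * 2^k⌋₊ : ℝ)/2^k)) atTop (nhds t) := by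
    rw [← tendsto_sub_nhds_zero_iff]
    rw [tendsto_zero_iff_abs_tendsto_zero]
    apply squeeze_zero (fun k => abs_nonneg _) hdist
    exact tendsto_pow_atTop_nhds_zero_of_lt_one (by norm_num) (by norm_num)
  have hbound : ∀ k : ℕ, |g ((⌊t * 2^k⌋₊ : ℝ)/2^k)| ≤ a := by
    intro k
    apply keybound k
    have h1 : t * 2^k ≤ ((N * 2^k : ℕ) : ℝ) := by
      push_cast
      exact mul_le_mul_of_nonneg_right htN (by positivity)
    calc ⌊t * 2^k⌋₊ ≤ ⌊((N * 2^k : ℕ) : ℝ)⌋₊ := Nat.floor_le_floor h1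
      _ = N * 2^k := Nat.floor_natCast _
  have htg : Tendsto (fun k : ℕ => |g ((⌊t * 2^k⌋₊ : ℝ)/2^k)|) atTop (nhds |g t|) :=
    ((hg.continuousAt).tendsto.comp hseq).abs
  exact le_of_tendsto htg (Filter.Eventually.of_forall hbound)


lemma BM.sqrt2_ge : (7/5:ℝ) ≤ Real.sqrt 2 := by
  rw [show (7/5:ℝ) = Real.sqrt ((7/5)^2) by rw [Real.sqrt_sq (by norm_num)]]
  exact Real.sqrt_le_sqrt (by norm_num)

lemma BM.sqrt2_pow {m : ℕ} (hm : 1 ≤ m) : ((m:ℝ)+1)/2 ≤ (Real.sqrt 2)^m := by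
  have hs := BM.sqrt2_ge
  have aux : ∀ k : ℕ, ((k:ℝ)+4)/2 ≤ (Real.sqrt 2)^(k+2) := by
    intro k
    induction k with
    | zero => simp [Real.sq_sqrt (by norm_num : (0:ℝ) ≤ 2)]; norm_num
    | succ k ih =>
      have : (Real.sqrt 2)^(k+3) = Real.sqrt 2 * (Real.sqrt 2)^(k+2) := by ring
      rw [show k+1+2 = k+3 by omega, this]
      have h1 : (7/5:ℝ) * (((k:ℝ)+4)/2) ≤ Real.sqrt 2 * (Real.sqrt 2)^(k+2) := by
        apply mul_le_mul hs ih (by positivity) (by positivity)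
      refine le_trans ?_ h1
      push_cast
      linarith [Nat.cast_nonneg (α := ℝ) k]
  match m, hm with
  | 1, _ => simpa using (by linarith : ((1:ℝ)+1)/2 ≤ Real.sqrt 2)
  | (k+2), _ => exact le_trans (by push_cast; linarith) (aux k)

lemma BM.r_sq_mul_two : BM.r^2 * 2 = Real.sqrt 2 := by
  have h1 : BM.r^2 = (2:ℝ) ^ (-(1/2) : ℝ) := by
    rw [BM.r, ← Real.rpow_natCast ((2:ℝ) ^ (-(1/4):ℝ)) 2, ← Real.rpow_mul (by norm_num)]
    norm_num
  have h2 : (2:ℝ) ^ (-(1/2):ℝ) * 2 = (2:ℝ) ^ ((1/2):ℝ) := by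
    conv_rhs => rw [show ((1:ℝ)/2) = -(1/2)+1 by norm_num]
    rw [Real.rpow_add (by norm_num), Real.rpow_one]
  rw [h1, h2, ← Real.sqrt_eq_rpow]

lemma BM.r_pow_identity (m : ℕ) : BM.r^(2*m) * 2^m = (Real.sqrt 2)^m := by
  rw [pow_mul, ← mul_pow, BM.r_sq_mul_two]

lemma BM.exp_le_quarter {x : ℝ} (hx : 3 ≤ x) : Real.exp (-x) ≤ 1/4 := by
  rw [Real.exp_neg]
  have h1 : (4:ℝ) ≤ x + 1 := by linarith
  have h2 : x + 1 ≤ Real.exp x := by linarith [Real.add_one_le_exp x]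
  rw [inv_eq_one_div, div_le_div_iff₀ (by positivity) (by norm_num)]
  linarith

lemma BM.summable_aux {c ρ : ℝ} (hρ : 0 < ρ) :
    Summable (fun n : ℕ => ((n:ℝ)+c) * Real.exp (-ρ*n)) := by
  have h1 : Summable (fun n : ℕ => (n:ℝ) * Real.exp (-ρ*n)) := by
    simpa using Real.summable_pow_mul_exp_neg_nat_mul 1 hρ
  have h2 : Summable (fun n : ℕ => Real.exp (-ρ*n)) := by
    simpa using Real.summable_pow_mul_exp_neg_nat_mul 0 hρ
  have := h1.add (h2.mul_left c)
  apply this.congr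
  intro n
  ring


/-- A standard one-dimensional Brownian motion. -/
def IsBrownian {Ω : Type*} [MeasurableSpace Ω] (B : ℝ → Ω → ℝ) (P : Measure Ω) : Prop :=
  (∀ ω, B 0 ω = 0) ∧
  (∀ ω, Continuous fun t => B t ω) ∧
  (∀ t, Measurable (B t)) ∧
  (∀ s t : ℝ, 0 ≤ s → s ≤ t →
    P.map (fun ω => B t ω - B s ω) = gaussianReal 0 (Real.toNNReal (t - s))) ∧
  (∀ (n : ℕ) (u : ℕ → ℝ), Monotone u → (∀ i, 0 ≤ u i) →
    iIndepFun
      (fun i : Fin n => fun ω => B (u (i + 1)) ω - B (u i) ω) P)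

set_option maxHeartbeats 2000000 in
lemma BM.sublinear {Ω : Type*} [MeasureSpace Ω] [IsProbabilityMeasure (ℙ : Measure Ω)]
    (f : ℝ → Ω → ℝ) (hf : IsBrownian f ℙ) {δ : ℝ} (hδ : 0 < δ) :
    ∀ᵐ ω ∂(ℙ : Measure Ω), ∀ᶠ n : ℕ in atTop,
      ∀ s ∈ Set.Icc (0:ℝ) ((n:ℝ)+1), |f s ω| ≤ δ * n := by
  obtain ⟨hf0, hfc, hfm, hflaw, -⟩ := hf
  -- the bad events
  set A : ℕ → Set Ω := fun n =>
    (⋃ j ∈ Finset.range (n+2), {ω | δ*n/2 ≤ |f j ω|}) ∪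
    (⋃ i : ℕ, ⋃ j ∈ Finset.range ((n+1) * 2^(i+1)),
      {ω | BM.r^(i+1)/11 * (δ*n) ≤ |f (((j:ℝ)+1)/2^(i+1)) ω - f ((j:ℝ)/2^(i+1)) ω|}) with hA
  set n₀ : ℕ := ⌈39/δ + 8/δ^2⌉₊ + 1 with hn₀
  set bfun : ℕ → ℝ := fun n =>
    2*((n:ℝ)+2)*Real.exp (-(δ^2/16)*n) + 8*((n:ℝ)+1)*Real.exp (-(δ^2/484)*n) with hbfun
  -- measure bound
  have hμA : ∀ n : ℕ, n₀ ≤ n → (ℙ : Measure Ω) (A n) ≤ ENNReal.ofReal (bfun n) := by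
    intro n hn
    have hnn₀ : (39/δ + 8/δ^2 : ℝ) ≤ n := by
      calc (39/δ + 8/δ^2 : ℝ) ≤ ⌈39/δ + 8/δ^2⌉₊ := Nat.le_ceil _
        _ ≤ n := by exact_mod_cast Nat.le_of_lt (by omega)
    have h39 : (39:ℝ) ≤ δ * n := by
      have h1 : (39/δ : ℝ) ≤ n := by
        have : (0:ℝ) ≤ 8/δ^2 := by positivity
        linarith
      calc (39:ℝ) = δ * (39/δ) := by field_simp
        _ ≤ δ * n := by apply mul_le_mul_of_nonneg_left h1 hδ.le
    have h8 : (8:ℝ) ≤ δ^2 * n := by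
      have h1 : (8/δ^2 : ℝ) ≤ n := by
        have : (0:ℝ) ≤ 39/δ := by positivity
        linarith
      calc (8:ℝ) = δ^2 * (8/δ^2) := by field_simp
        _ ≤ δ^2 * n := by apply mul_le_mul_of_nonneg_left h1 (by positivity)
    have hn1 : (1:ℝ) ≤ (n:ℝ) := by
      by_contra h
      push_neg at h
      have : (n:ℝ) = 0 := by
        have : n = 0 := by exact_mod_cast Nat.lt_one_iff.mp (by exact_mod_cast h)
        simp [this]
      rw [this] at h8
      simp at h8
      linarith
    have hnpos : (0:ℝ) < δ * n := by linarith
    -- part S0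
    have hS0 : (ℙ : Measure Ω) (⋃ j ∈ Finset.range (n+2), {ω | δ*n/2 ≤ |f j ω|})
        ≤ ENNReal.ofReal (2*((n:ℝ)+2)*Real.exp (-(δ^2/16)*n)) := by
      have hEj : ∀ j ∈ Finset.range (n+2), (ℙ : Measure Ω) {ω | δ*n/2 ≤ |f j ω|}
          ≤ ENNReal.ofReal (2*Real.exp (-(δ^2/16)*n)) := by
        intro j hj
        have hjle : (j:ℝ) ≤ (n:ℝ)+1 := by
          have := Finset.mem_range.mp hj
          push_cast
          exact_mod_cast Nat.lt_succ_iff.mp (by omega)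
        rcases Nat.eq_zero_or_pos j with rfl | hjpos
        · have hempty : {ω | δ*(n:ℝ)/2 ≤ |f ((0:ℕ):ℝ) ω|} = (∅ : Set Ω) := by
            ext ω
            simp only [Set.mem_setOf_eq, Set.mem_empty_iff_false, iff_false, not_le,
              Nat.cast_zero, hf0 ω, abs_zero]
            positivity
          rw [hempty]
          simp
        · have hjpos' : (0:ℝ) < (j:ℝ) := by exact_mod_cast hjpos
          have hmap : Measure.map (f (j:ℝ)) ℙ = gaussianReal 0 (Real.toNNReal (j:ℝ)) := by
            have h := hflaw 0 (j:ℝ) le_rfl hjpos'.le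
            have he : (fun ω => f (j:ℝ) ω - f 0 ω) = f (j:ℝ) := by
              funext ω; rw [hf0]; ring
            rw [he] at h
            simpa using h
          have hv : Real.toNNReal (j:ℝ) ≠ 0 := by
            simp only [ne_eq, Real.toNNReal_eq_zero, not_le]
            exact hjpos'
          have hvc : ((Real.toNNReal (j:ℝ)) : ℝ) = (j:ℝ) := Real.coe_toNNReal _ hjpos'.le
          have hsqrt : Real.sqrt (Real.toNNReal (j:ℝ)) ≤ δ*n/2 := by
            rw [hvc]
            have h1 : Real.sqrt (j:ℝ) ≤ Real.sqrt ((δ*n/2)^2) := by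
              apply Real.sqrt_le_sqrt
              nlinarith [mul_le_mul_of_nonneg_right h8 (by positivity : (0:ℝ) ≤ (n:ℝ))]
            rwa [Real.sqrt_sq (by positivity)] at h1
          refine (BM.gauss_abs_tail (hfm _) hv hmap (a := δ*n/2) (by positivity) hsqrt).trans ?_
          apply ENNReal.ofReal_le_ofReal
          have hkey : (δ^2/16)*n ≤ (δ*n/2)^2/(2*(j:ℝ)) := by
            rw [le_div_iff₀ (by positivity)]
            have h2n : (j:ℝ) ≤ 2*n := by linarith
            nlinarith [mul_le_mul_of_nonneg_left h2n
              (mul_nonneg (sq_nonneg δ) (by positivity : (0:ℝ) ≤ (n:ℝ)))]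
          have hexp : Real.exp (-(δ*n/2)^2/(2*((Real.toNNReal (j:ℝ)):ℝ)))
              ≤ Real.exp (-(δ^2/16)*n) := by
            rw [hvc]
            apply Real.exp_le_exp.mpr
            rw [neg_div]
            linarith
          linarith [mul_le_mul_of_nonneg_left hexp (by norm_num : (0:ℝ) ≤ 2)]
      calc (ℙ : Measure Ω) (⋃ j ∈ Finset.range (n+2), {ω | δ*n/2 ≤ |f j ω|})
          ≤ ∑ j ∈ Finset.range (n+2), (ℙ : Measure Ω) {ω | δ*n/2 ≤ |f j ω|} :=
            measure_biUnion_finset_le _ _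
        _ ≤ ∑ _j ∈ Finset.range (n+2), ENNReal.ofReal (2*Real.exp (-(δ^2/16)*n)) :=
            Finset.sum_le_sum hEj
        _ = (n+2 : ℕ) * ENNReal.ofReal (2*Real.exp (-(δ^2/16)*n)) := by
            rw [Finset.sum_const, Finset.card_range, nsmul_eq_mul]
        _ ≤ ENNReal.ofReal (2*((n:ℝ)+2)*Real.exp (-(δ^2/16)*n)) := by
            rw [← ENNReal.ofReal_natCast (n+2), ← ENNReal.ofReal_mul (by positivity)]
            apply ENNReal.ofReal_le_ofReal
            push_cast
            apply le_of_eq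
            ring
    have hS1 : (ℙ : Measure Ω) (⋃ i : ℕ, ⋃ j ∈ Finset.range ((n+1) * 2^(i+1)),
        {ω | BM.r^(i+1)/11 * (δ*n) ≤ |f (((j:ℝ)+1)/2^(i+1)) ω - f ((j:ℝ)/2^(i+1)) ω|})
        ≤ ENNReal.ofReal (8*((n:ℝ)+1)*Real.exp (-(δ^2/484)*n)) := by
      have hr := BM.r_pos
      set q : ℝ := Real.exp (-(δ^2*n^2)/484) with hq
      have hq0 : 0 < q := Real.exp_pos _
      have hq4 : q ≤ 1/4 := by
        rw [hq, show (-(δ^2*n^2)/484 : ℝ) = -(δ^2*n^2/484) by ring]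
        apply BM.exp_le_quarter
        nlinarith [mul_le_mul h39 h39 (by norm_num) (by positivity : (0:ℝ) ≤ δ*n)]
      -- single increment bound
      have hEij : ∀ i : ℕ, ∀ j ∈ Finset.range ((n+1) * 2^(i+1)),
          (ℙ : Measure Ω) {ω | BM.r^(i+1)/11 * (δ*n)
              ≤ |f (((j:ℝ)+1)/2^(i+1)) ω - f ((j:ℝ)/2^(i+1)) ω|}
          ≤ ENNReal.ofReal (2 * q^(i+2)) := by
        intro i j _
        set m : ℕ := i + 1 with hm
        have hm1 : 1 ≤ m := by omega
        have h2m : (0:ℝ) < 2^m := by positivity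
        have hts : ((j:ℝ)+1)/2^m - (j:ℝ)/2^m = 1/2^m := by ring
        have hmap : Measure.map (fun ω => f (((j:ℝ)+1)/2^m) ω - f ((j:ℝ)/2^m) ω) ℙ
            = gaussianReal 0 (Real.toNNReal (1/2^m)) := by
          have h := hflaw ((j:ℝ)/2^m) (((j:ℝ)+1)/2^m) (by positivity)
            (by gcongr; linarith)
          rw [hts] at h
          exact h
        have hv : Real.toNNReal (1/(2:ℝ)^m) ≠ 0 := by
          simp only [ne_eq, Real.toNNReal_eq_zero, not_le]
          positivity
        have hvc : ((Real.toNNReal (1/(2:ℝ)^m)) : ℝ) = 1/2^m :=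
          Real.coe_toNNReal _ (by positivity)
        have hsq : (BM.r^m/11*(δ*n))^2 = BM.r^(2*m)*((δ*n)^2/121) := by
          rw [mul_pow, div_pow, ← pow_mul, mul_comm m 2]
          ring
        have h121 : (121:ℝ) ≤ (Real.sqrt 2)^m * (δ*n)^2 := by
          have hs1 : (1:ℝ) ≤ (Real.sqrt 2)^m := by
            apply one_le_pow₀
            rw [show (1:ℝ) = Real.sqrt 1 by simp]
            exact Real.sqrt_le_sqrt (by norm_num)
          nlinarith [mul_le_mul h39 h39 (by norm_num) (by positivity : (0:ℝ) ≤ δ*n)]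
        have hsqrt : Real.sqrt (Real.toNNReal (1/(2:ℝ)^m)) ≤ BM.r^m/11 * (δ*n) := by
          rw [hvc]
          have h1 : Real.sqrt (1/(2:ℝ)^m) ≤ Real.sqrt ((BM.r^m/11*(δ*n))^2) := by
            apply Real.sqrt_le_sqrt
            rw [hsq, div_le_iff₀ h2m]
            have hid : (BM.r^(2*m) * ((δ*n)^2/121)) * 2^m
                = (Real.sqrt 2)^m * ((δ*n)^2/121) := by
              rw [← BM.r_pow_identity m]; ring
            rw [hid]
            linarith
          rwa [Real.sqrt_sq (by positivity)] at h1
        refine (BM.gauss_abs_tail ((hfm _).sub (hfm _)) hv hmap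
          (a := BM.r^m/11 * (δ*n)) (by positivity) hsqrt).trans ?_
        apply ENNReal.ofReal_le_ofReal
        have hvge : ((m:ℝ)+1)/484 * (δ*n)^2 ≤ (BM.r^m/11*(δ*n))^2/(2*(1/2^m)) := by
          have hexp2 : (BM.r^m/11*(δ*n))^2/(2*(1/(2:ℝ)^m))
              = (Real.sqrt 2)^m * ((δ*n)^2/242) := by
            rw [hsq, show (2*(1/(2:ℝ)^m)) = 2/2^m by ring, div_div_eq_mul_div,
              ← BM.r_pow_identity m]
            ring
          rw [hexp2]
          have hs2 := BM.sqrt2_pow hm1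
          nlinarith [sq_nonneg (δ*n)]
        have hexp : Real.exp (-(BM.r^m/11*(δ*n))^2/(2*((Real.toNNReal (1/(2:ℝ)^m)):ℝ)))
            ≤ q^(i+2) := by
          rw [hvc, hq, ← Real.exp_nat_mul]
          apply Real.exp_le_exp.mpr
          rw [neg_div]
          have hcast : ((i:ℝ)+2) * (-(δ^2*n^2)/484) = -(((m:ℝ)+1)/484 * (δ*n)^2) := by
            rw [hm]; push_cast; ring
          calc -((BM.r^m/11*(δ*n))^2/(2*(1/(2:ℝ)^m)))
              ≤ -(((m:ℝ)+1)/484 * (δ*n)^2) := by linarith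
            _ = ((i:ℕ):ℝ)*(-(δ^2*n^2)/484) + 2*(-(δ^2*n^2)/484) := by
                rw [hm]; push_cast; ring
            _ = ((i+2:ℕ):ℝ) * (-(δ^2*n^2)/484) := by push_cast; ring
        linarith [mul_le_mul_of_nonneg_left hexp (by norm_num : (0:ℝ) ≤ 2)]
      -- sum over j then i
      set u : ℕ → ℝ := fun i => (((n+1) * 2^(i+1) : ℕ):ℝ) * (2 * q^(i+2)) with hu
      have huform : ∀ i : ℕ, u i = (4*((n:ℝ)+1)*q^2) * (2*q)^i := by
        intro i
        rw [hu]
        push_cast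
        ring
      have h2q1 : 2*q < 1 := by linarith
      have h2q0 : (0:ℝ) ≤ 2*q := by linarith
      have hus : Summable u := by
        apply ((summable_geometric_of_lt_one h2q0 h2q1).mul_left (4*((n:ℝ)+1)*q^2)).congr
        intro i
        rw [huform]
      have hut : ∑' i, u i ≤ 8*((n:ℝ)+1)*Real.exp (-(δ^2/484)*n) := by
        have h1 : ∑' i, u i = (4*((n:ℝ)+1)*q^2) * (1-2*q)⁻¹ := by
          rw [tsum_congr huform, tsum_mul_left, tsum_geometric_of_lt_one h2q0 h2q1]
        rw [h1]
        have h2 : (1-2*q)⁻¹ ≤ 2 := by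
          rw [show (2:ℝ) = (1/2:ℝ)⁻¹ by norm_num]
          apply inv_anti₀ (by norm_num)
          linarith
        have hqq : q ≤ Real.exp (-(δ^2/484)*n) := by
          rw [hq]
          apply Real.exp_le_exp.mpr
          nlinarith [sq_nonneg δ]
        have hq1 : q ≤ 1 := by linarith
        have hstep : (4*((n:ℝ)+1)*q^2) * (1-2*q)⁻¹ ≤ (4*((n:ℝ)+1)*q^2) * 2 := by
          apply mul_le_mul_of_nonneg_left h2 (by positivity)
        calc (4*((n:ℝ)+1)*q^2) * (1-2*q)⁻¹ ≤ (4*((n:ℝ)+1)*q^2) * 2 := hstep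
          _ = 8*((n:ℝ)+1)*(q*q) := by ring
          _ ≤ 8*((n:ℝ)+1)*q := by
              have hqsq : q*q ≤ q := by nlinarith
              exact mul_le_mul_of_nonneg_left hqsq (by positivity)
          _ ≤ 8*((n:ℝ)+1)*Real.exp (-(δ^2/484)*n) := by
              apply mul_le_mul_of_nonneg_left hqq (by positivity)
      calc (ℙ : Measure Ω) (⋃ i : ℕ, ⋃ j ∈ Finset.range ((n+1) * 2^(i+1)),
          {ω | BM.r^(i+1)/11 * (δ*n) ≤ |f (((j:ℝ)+1)/2^(i+1)) ω - f ((j:ℝ)/2^(i+1)) ω|})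
          ≤ ∑' i : ℕ, (ℙ : Measure Ω) (⋃ j ∈ Finset.range ((n+1) * 2^(i+1)),
            {ω | BM.r^(i+1)/11 * (δ*n) ≤ |f (((j:ℝ)+1)/2^(i+1)) ω - f ((j:ℝ)/2^(i+1)) ω|}) :=
            measure_iUnion_le _
        _ ≤ ∑' i : ℕ, ENNReal.ofReal (u i) := by
            apply ENNReal.tsum_le_tsum
            intro i
            calc (ℙ : Measure Ω) (⋃ j ∈ Finset.range ((n+1) * 2^(i+1)),
                {ω | BM.r^(i+1)/11 * (δ*n) ≤ |f (((j:ℝ)+1)/2^(i+1)) ω - f ((j:ℝ)/2^(i+1)) ω|})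
                ≤ ∑ j ∈ Finset.range ((n+1) * 2^(i+1)), (ℙ : Measure Ω)
                  {ω | BM.r^(i+1)/11 * (δ*n) ≤ |f (((j:ℝ)+1)/2^(i+1)) ω - f ((j:ℝ)/2^(i+1)) ω|} :=
                  measure_biUnion_finset_le _ _
              _ ≤ ∑ _j ∈ Finset.range ((n+1) * 2^(i+1)), ENNReal.ofReal (2 * q^(i+2)) :=
                  Finset.sum_le_sum (hEij i)
              _ = ((n+1) * 2^(i+1) : ℕ) * ENNReal.ofReal (2 * q^(i+2)) := by
                  rw [Finset.sum_const, Finset.card_range, nsmul_eq_mul]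
              _ = ENNReal.ofReal (u i) := by
                  rw [hu, ← ENNReal.ofReal_natCast ((n+1) * 2^(i+1)),
                    ← ENNReal.ofReal_mul (by positivity)]
        _ = ENNReal.ofReal (∑' i, u i) := by
            rw [ENNReal.ofReal_tsum_of_nonneg (fun i => by rw [huform]; positivity) hus]
        _ ≤ ENNReal.ofReal (8*((n:ℝ)+1)*Real.exp (-(δ^2/484)*n)) :=
            ENNReal.ofReal_le_ofReal hut
    calc (ℙ : Measure Ω) (A n) ≤ _ + _ := measure_union_le _ _
      _ ≤ ENNReal.ofReal (2*((n:ℝ)+2)*Real.exp (-(δ^2/16)*n))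
          + ENNReal.ofReal (8*((n:ℝ)+1)*Real.exp (-(δ^2/484)*n)) := add_le_add hS0 hS1
      _ = ENNReal.ofReal (bfun n) := by
          rw [hbfun, ENNReal.ofReal_add (by positivity) (by positivity)]
  -- Borel-Cantelli
  have hsum : (∑' k : ℕ, (ℙ : Measure Ω) (A (k + n₀))) ≠ ∞ := by
    have hsb : Summable (fun k : ℕ => bfun (k + n₀)) := by
      apply (summable_nat_add_iff n₀).mpr
      apply Summable.add
      · apply ((BM.summable_aux (c := 2) (by positivity : (0:ℝ) < δ^2/16)).mul_left 2).congr
        intro n; ring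
      · apply ((BM.summable_aux (c := 1) (by positivity : (0:ℝ) < δ^2/484)).mul_left 8).congr
        intro n; ring
    have hb_nonneg : ∀ k : ℕ, 0 ≤ bfun (k + n₀) := by
      intro k; rw [hbfun]; positivity
    refine ne_top_of_le_ne_top (ENNReal.ofReal_ne_top (r := ∑' k : ℕ, bfun (k + n₀))) ?_
    calc (∑' k : ℕ, (ℙ : Measure Ω) (A (k + n₀)))
        ≤ ∑' k : ℕ, ENNReal.ofReal (bfun (k + n₀)) :=
          ENNReal.tsum_le_tsum (fun k => hμA (k + n₀) (by omega))
      _ = ENNReal.ofReal (∑' k : ℕ, bfun (k + n₀)) :=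
          (ENNReal.ofReal_tsum_of_nonneg hb_nonneg hsb).symm
  filter_upwards [MeasureTheory.ae_eventually_notMem hsum] with ω hω
  obtain ⟨K, hK⟩ := eventually_atTop.mp hω
  rw [eventually_atTop]
  refine ⟨K + n₀ + 1, fun n hn => ?_⟩
  have hA' : ω ∉ A n := by
    have : n = (n - n₀) + n₀ := by omega
    rw [this]
    exact hK (n - n₀) (by omega)
  have hn1 : 1 ≤ n := by omega
  rw [hA, Set.mem_union, not_or] at hA'
  obtain ⟨hA0, hA1⟩ := hA'
  simp only [Set.mem_iUnion, Finset.mem_range, Set.mem_setOf_eq, not_exists] at hA0 hA1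
  -- apply chain
  have hchain := BM.chain (fun s => f s ω) (hfc ω) (n+1) (δ*n) (by positivity)
    (fun j hj => le_of_not_ge (hA0 j (by omega)))
    (fun i hi j hj => by
      have := hA1 (i-1) j
      rw [show (i-1)+1 = i by omega] at this
      have h2 : ¬ (BM.r^i/11 * (δ*n) ≤ |f (((j:ℝ)+1)/2^i) ω - f ((j:ℝ)/2^i) ω|) := by
        apply this
        omega
      exact le_of_not_ge h2)
  intro s hs
  have : s ∈ Set.Icc (0:ℝ) ((n+1 : ℕ) : ℝ) := by
    obtain ⟨h1, h2⟩ := hs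
    constructor
    · exact h1
    · push_cast; linarith
  exact hchain s this


set_option maxHeartbeats 1000000 in
/-- Pathwise bound on the first coordinate of the obliquely reflected Brownian
motion `Z₁(t) = B₁(t) + μ₁ t + r ℓ(t)`, and transience `Z₁(t) → −∞` a.s. when
`μ₁ + r μ₂⁻ < 0`. -/
theorem stmt_12 {Ω : Type*} [MeasureSpace Ω] [IsProbabilityMeasure (ℙ : Measure Ω)]
    (B₁ B₂ : ℝ → Ω → ℝ) (hB₁ : IsBrownian B₁ ℙ) (hB₂ : IsBrownian B₂ ℙ)
    (hind : IndepFun (fun ω => fun t => B₁ t ω) (fun ω => fun t => B₂ t ω) ℙ)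
    (μ₁ μ₂ r : ℝ)
    (ℓ : ℝ → Ω → ℝ)
    (hℓ : ∀ t ω, ℓ t ω = -sInf ((fun s => B₂ s ω + μ₂ * s) '' Set.Icc 0 t))
    (Z₁ : ℝ → Ω → ℝ)
    (hZ₁ : ∀ t ω, Z₁ t ω = B₁ t ω + μ₁ * t + r * ℓ t ω) :
    (∀ t : ℝ, 0 ≤ t → ∀ ω,
      Z₁ t ω ≤ (μ₁ + r * max (-μ₂) 0) * t + B₁ t ω
        + |r| * sSup ((fun s => |B₂ s ω|) '' Set.Icc 0 t)) ∧
    (μ₁ + r * max (-μ₂) 0 < 0 →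
      ∀ᵐ ω ∂(ℙ : Measure Ω), Tendsto (fun t => Z₁ t ω) atTop atBot) := by
  set M : ℝ := max (-μ₂) 0 with hM
  have hM0 : 0 ≤ M := le_max_right _ _
  have hMμ : -M ≤ μ₂ := by
    rcases le_max_iff.mpr (Or.inl (le_refl (-μ₂))) with h
    have := le_max_left (-μ₂) 0
    linarith
  -- Part 1
  have hpart1 : ∀ t : ℝ, 0 ≤ t → ∀ ω,
      Z₁ t ω ≤ (μ₁ + r * M) * t + B₁ t ω
        + |r| * sSup ((fun s => |B₂ s ω|) '' Set.Icc 0 t) := by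
    intro t ht ω
    set S : ℝ := sSup ((fun s => |B₂ s ω|) '' Set.Icc 0 t) with hS
    have hne : (Set.Icc (0:ℝ) t).Nonempty := ⟨0, le_refl 0, ht⟩
    have hbddS : BddAbove ((fun s => |B₂ s ω|) '' Set.Icc 0 t) :=
      (isCompact_Icc.image_of_continuousOn ((hB₂.2.1 ω).abs.continuousOn)).bddAbove
    have hSmem : ∀ s ∈ Set.Icc (0:ℝ) t, |B₂ s ω| ≤ S :=
      fun s hs => le_csSup hbddS (Set.mem_image_of_mem _ hs)
    have hS0 : 0 ≤ S := le_trans (abs_nonneg _) (hSmem 0 ⟨le_refl 0, ht⟩)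
    have hbddI : BddBelow ((fun s => B₂ s ω + μ₂ * s) '' Set.Icc 0 t) :=
      (isCompact_Icc.image_of_continuousOn
        (((hB₂.2.1 ω).add (continuous_const.mul continuous_id)).continuousOn)).bddBelow
    -- upper bound for ℓ
    have hup : ℓ t ω ≤ S + M * t := by
      rw [hℓ]
      have : -(S + M*t) ≤ sInf ((fun s => B₂ s ω + μ₂ * s) '' Set.Icc 0 t) := by
        apply le_csInf (hne.image _)
        rintro x ⟨s, hs, rfl⟩
        show -(S + M*t) ≤ B₂ s ω + μ₂ * s
        have h1 : -S ≤ B₂ s ω := by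
          have := hSmem s hs
          have := neg_abs_le (B₂ s ω)
          linarith
        have h2 : -(M*t) ≤ μ₂ * s := by
          have hs0 := hs.1
          have hst := hs.2
          have hmul : -M * s ≤ μ₂ * s := mul_le_mul_of_nonneg_right hMμ hs0
          have hmt : -M * t ≤ -M * s := by
            rcases le_or_gt M 0 with h | h
            · have : M = 0 := le_antisymm h hM0
              simp [this]
            · nlinarith
          linarith
        linarith
      linarith
    -- lower bound for ℓ
    have hlow : M * t - S ≤ ℓ t ω := by
      rw [hℓ]
      rcases le_or_gt 0 μ₂ with hμ | hμ
      · have hM00 : M = 0 := by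
          rw [hM, max_eq_right]
          linarith
        have h1 : sInf ((fun s => B₂ s ω + μ₂ * s) '' Set.Icc 0 t) ≤ 0 := by
          have hmem : (0:ℝ) ∈ (fun s => B₂ s ω + μ₂ * s) '' Set.Icc 0 t := by
            refine ⟨0, ⟨le_refl 0, ht⟩, ?_⟩
            simp [hB₂.1 ω]
          exact csInf_le hbddI hmem
        rw [hM00]
        linarith
      · have hM1 : M = -μ₂ := by rw [hM, max_eq_left]; linarith
        have h1 : sInf ((fun s => B₂ s ω + μ₂ * s) '' Set.Icc 0 t) ≤ B₂ t ω + μ₂ * t :=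
          csInf_le hbddI ⟨t, ⟨ht, le_refl t⟩, rfl⟩
        have h2 : B₂ t ω ≤ S := le_trans (le_abs_self _) (hSmem t ⟨ht, le_refl t⟩)
        rw [hM1]
        linarith
    -- combine
    have hr : r * ℓ t ω ≤ r * M * t + |r| * S := by
      rcases le_or_gt 0 r with h | h
      · rw [abs_of_nonneg h]
        have := mul_le_mul_of_nonneg_left hup h
        nlinarith
      · rw [abs_of_neg h]
        have := mul_le_mul_of_nonpos_left hlow h.le
        nlinarith
    rw [hZ₁]
    linarith
  refine ⟨hpart1, ?_⟩
  intro hc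
  set c : ℝ := μ₁ + r * M with hcdef
  set δ : ℝ := -c / (2*(1+|r|)) with hδdef
  have habs : (0:ℝ) < 1 + |r| := by positivity
  have hδ : 0 < δ := by
    rw [hδdef]
    apply div_pos (by linarith) (by positivity)
  have hδc : (1+|r|) * δ = -c/2 := by
    rw [hδdef]
    field_simp
  filter_upwards [BM.sublinear B₁ hB₁ hδ, BM.sublinear B₂ hB₂ hδ] with ω h1 h2
  obtain ⟨N₁, hN₁⟩ := eventually_atTop.mp h1
  obtain ⟨N₂, hN₂⟩ := eventually_atTop.mp h2
  apply tendsto_atBot_mono' atTop (f₁ := fun t => (c/2) * t)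
  · rw [Filter.EventuallyLE]
    filter_upwards [eventually_ge_atTop (((max N₁ N₂ : ℕ) : ℝ) + 1)] with t htt
    set n : ℕ := ⌊t⌋₊ with hn
    have ht0 : (0:ℝ) ≤ t := by
      have : (0:ℝ) ≤ ((max N₁ N₂ : ℕ) : ℝ) := Nat.cast_nonneg _
      linarith
    have hnt : (n:ℝ) ≤ t := Nat.floor_le ht0
    have htn1 : t < (n:ℝ) + 1 := Nat.lt_floor_add_one t
    have hmaxn : max N₁ N₂ ≤ n := by
      apply Nat.le_floor
      linarith
    have hN₁n : N₁ ≤ n := le_trans (le_max_left _ _) hmaxn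
    have hN₂n : N₂ ≤ n := le_trans (le_max_right _ _) hmaxn
    have hB₁b : |B₁ t ω| ≤ δ * n := hN₁ n hN₁n t (Set.mem_Icc.mpr ⟨ht0, htn1.le⟩)
    have hSb : sSup ((fun s => |B₂ s ω|) '' Set.Icc 0 t) ≤ δ * n := by
      apply csSup_le (Set.Nonempty.image _ ⟨0, Set.mem_Icc.mpr ⟨le_refl 0, ht0⟩⟩)
      rintro x ⟨s, hs, rfl⟩
      exact hN₂ n hN₂n s (Set.mem_Icc.mpr ⟨hs.1, le_trans hs.2 htn1.le⟩)
    have hmain := hpart1 t ht0 ω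
    have hB₁b' : B₁ t ω ≤ δ * n := le_trans (le_abs_self _) hB₁b
    have hδn : δ * n ≤ δ * t := mul_le_mul_of_nonneg_left hnt hδ.le
    have habs0 : 0 ≤ |r| := abs_nonneg r
    calc Z₁ t ω ≤ c * t + B₁ t ω + |r| * sSup ((fun s => |B₂ s ω|) '' Set.Icc 0 t) := hmain
      _ ≤ c * t + δ * t + |r| * (δ * t) := by
          have h3 : |r| * sSup ((fun s => |B₂ s ω|) '' Set.Icc 0 t) ≤ |r| * (δ * t) :=
            mul_le_mul_of_nonneg_left (le_trans hSb hδn) habs0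
          linarith
      _ = c * t + ((1+|r|) * δ) * t := by ring
      _ = (c/2) * t := by rw [hδc]; ring
  · exact tendsto_id.const_mul_atTop_of_neg (by linarith)
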